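/- Let 1 < q ≤ 2 and let ω : ℝ^d → ℝ be given by ω(y) = (1/2)·‖y‖_q². Then ω is (q−1)-strongly convex on the unit ℓ_q ball B_q(1) = {y : ‖y‖_q ≤ 1} with respect to the ℓ_q norm: for all x, y ∈ B_q(1) and every g ∈ ℝ^d satisfying ω(z) ≥ ω(x) + ⟨g, z − x⟩ for all z ∈ B_q(1), one has ω(y) − ω(x) − ⟨g, y − x⟩ ≥ ((q−1)/2)·‖y − x‖_q². Moreover, the Bregman divergence from 0 satisfies max_{y ∈ B_q(1)} D_ω(y ‖ 0) = 1/2, where D_ω(y ‖ 0) = ω(y) − ω(0) − ⟨∇ω(0), y⟩ = (1/2)·‖y‖_q². -/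

import Mathlib

open Finset Real Filter

/-- The ℓ_q norm of a finite-dimensional real vector, for real `q ≥ 1`. -/
noncomputable def lpNorm {ι : Type*} [Fintype ι] (q : ℝ) (x : ι → ℝ) : ℝ :=
  (∑ j, |x j| ^ q) ^ (1 / q)

/-- The standard inner product on `ℝ^d`. -/
noncomputable def dotp {d : ℕ} (x y : Fin d → ℝ) : ℝ := ∑ i, x i * y i

set_option linter.unusedVariables false
set_option maxHeartbeats 1000000
lemma lpNorm_nonneg {ι : Type*} [Fintype ι] (q : ℝ) (x : ι → ℝ) : 0 ≤ lpNorm q x :=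
  Real.rpow_nonneg (Finset.sum_nonneg fun j _ => Real.rpow_nonneg (abs_nonneg _) _) _

lemma lpNorm_smul {ι : Type*} [Fintype ι] {q : ℝ} (hq : 0 < q) (c : ℝ) (x : ι → ℝ) :
    lpNorm q (fun j => c * x j) = |c| * lpNorm q x := by
  unfold lpNorm
  have h1 : ∀ j : ι, |c * x j| ^ q = |c| ^ q * |x j| ^ q := by
    intro j
    rw [abs_mul, Real.mul_rpow (abs_nonneg _) (abs_nonneg _)]
  simp_rw [h1, ← Finset.mul_sum]
  rw [Real.mul_rpow (Real.rpow_nonneg (abs_nonneg _) _)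
    (Finset.sum_nonneg fun j _ => Real.rpow_nonneg (abs_nonneg _) _),
    ← Real.rpow_mul (abs_nonneg _), mul_one_div, div_self hq.ne', Real.rpow_one]

lemma lpNorm_add_le {ι : Type*} [Fintype ι] {q : ℝ} (hq : 1 ≤ q) (x y : ι → ℝ) :
    lpNorm q (fun j => x j + y j) ≤ lpNorm q x + lpNorm q y :=
  Real.Lp_add_le Finset.univ x y hq


lemma core1d {q : ℝ} (hq1 : 1 < q) (hq2 : q ≤ 2) {t : ℝ} (ht0 : 0 ≤ t) (ht1 : t ≤ 1) :
    2 + q * (q - 1) * t ^ 2 ≤ (1 + t) ^ q + (1 - t) ^ q := by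
  have hq0 : (0:ℝ) < q := by linarith
  set G : ℝ → ℝ := fun s => q * (1 + s) ^ (q - 1) - q * (1 - s) ^ (q - 1) - 2 * q * (q - 1) * s
    with hG
  set F : ℝ → ℝ := fun s => (1 + s) ^ q + (1 - s) ^ q - 2 - q * (q - 1) * s ^ 2 with hF
  -- continuity helpers
  have hcont : ∀ p : ℝ, 0 ≤ p → ContinuousOn (fun s : ℝ => (1 + s) ^ p) (Set.Icc 0 1) := by
    intro p hp
    exact (continuousOn_const.add continuousOn_id).rpow_const (fun x _ => Or.inr hp)
  have hcont' : ∀ p : ℝ, 0 ≤ p → ContinuousOn (fun s : ℝ => (1 - s) ^ p) (Set.Icc 0 1) := by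
    intro p hp
    exact (continuousOn_const.sub continuousOn_id).rpow_const (fun x _ => Or.inr hp)
  -- derivative of G on the interior
  have hint : interior (Set.Icc (0:ℝ) 1) = Set.Ioo 0 1 := interior_Icc
  have hGderiv : ∀ s ∈ Set.Ioo (0:ℝ) 1, HasDerivAt G
      (q * ((q - 1) * (1 + s) ^ (q - 2)) + q * ((q - 1) * (1 - s) ^ (q - 2)) - 2 * q * (q - 1)) s := by
    intro s hs
    have h1p : (0:ℝ) < 1 + s := by linarith [hs.1]
    have h1m : (0:ℝ) < 1 - s := by linarith [hs.2]
    have d1 : HasDerivAt (fun s : ℝ => (1 + s) ^ (q - 1)) (1 * (q-1) * (1 + s) ^ (q - 1 - 1)) s := by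
      simpa using ((hasDerivAt_id s).const_add 1).rpow_const (p := q - 1) (Or.inl h1p.ne')
    have d2 : HasDerivAt (fun s : ℝ => (1 - s) ^ (q - 1)) ((-1) * (q-1) * (1 - s) ^ (q - 1 - 1)) s := by
      simpa using ((hasDerivAt_id s).const_sub 1).rpow_const (p := q - 1) (Or.inl h1m.ne')
    have := ((d1.const_mul q).sub (d2.const_mul q)).sub ((hasDerivAt_id s).const_mul (2*q*(q-1)))
    refine this.congr_deriv ?_
    ring_nf
  have hGmono : MonotoneOn G (Set.Icc (0:ℝ) 1) := by
    apply monotoneOn_of_deriv_nonneg (convex_Icc 0 1)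
    · exact (((hcont _ (by linarith)).const_smul q |>.sub ((hcont' _ (by linarith)).const_smul q)).sub
        (continuousOn_const.mul continuousOn_id))
    · intro s hs
      rw [hint] at hs
      exact (hGderiv s hs).differentiableAt.differentiableWithinAt
    · intro s hs
      rw [hint] at hs
      rw [(hGderiv s hs).deriv]
      have h1p : (0:ℝ) < 1 + s := by linarith [hs.1]
      have h1m : (0:ℝ) < 1 - s := by linarith [hs.2]
      set a := (1 + s) ^ (q - 2) with ha
      set b := (1 - s) ^ (q - 2) with hb
      have hapos : 0 < a := rpow_pos_of_pos h1p _
      have hbpos : 0 < b := rpow_pos_of_pos h1m _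
      have hab : 1 ≤ a * b := by
        rw [ha, hb, ← Real.mul_rpow h1p.le h1m.le]
        have hbase : 0 < (1 + s) * (1 - s) := mul_pos h1p h1m
        have hbase1 : (1 + s) * (1 - s) ≤ 1 := by nlinarith [sq_nonneg s]
        exact Real.one_le_rpow_of_pos_of_le_one_of_nonpos hbase hbase1 (by linarith)
      have hsum : 2 ≤ a + b := by nlinarith [sq_nonneg (a - b), sq_nonneg (a + b)]
      have hq1' : 0 ≤ q - 1 := by linarith
      nlinarith [mul_nonneg (mul_nonneg hq0.le hq1') (sub_nonneg.2 hsum)]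
  have hG0 : G 0 = 0 := by simp [hG]
  have hGnonneg : ∀ s ∈ Set.Icc (0:ℝ) 1, 0 ≤ G s := by
    intro s hs
    have := hGmono (Set.mem_Icc.mpr ⟨le_refl 0, zero_le_one⟩) hs hs.1
    rwa [hG0] at this
  -- F monotone
  have hFderiv : ∀ s ∈ Set.Ioo (0:ℝ) 1, HasDerivAt F (G s) s := by
    intro s hs
    have h1p : (0:ℝ) < 1 + s := by linarith [hs.1]
    have h1m : (0:ℝ) < 1 - s := by linarith [hs.2]
    have d1 : HasDerivAt (fun s : ℝ => (1 + s) ^ q) (1 * q * (1 + s) ^ (q - 1)) s := by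
      simpa using ((hasDerivAt_id s).const_add 1).rpow_const (p := q) (Or.inl h1p.ne')
    have d2 : HasDerivAt (fun s : ℝ => (1 - s) ^ q) ((-1) * q * (1 - s) ^ (q - 1)) s := by
      simpa using ((hasDerivAt_id s).const_sub 1).rpow_const (p := q) (Or.inl h1m.ne')
    have d3 : HasDerivAt (fun s : ℝ => q * (q-1) * s ^ 2) (q * (q-1) * (2 * s)) s := by
      have := (hasDerivAt_pow 2 s).const_mul (q * (q-1))
      refine this.congr_deriv ?_
      ring
    have := ((d1.add d2).sub (hasDerivAt_const s 2)).sub d3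
    refine this.congr_deriv ?_
    simp only [hG]
    ring
  have hFmono : MonotoneOn F (Set.Icc (0:ℝ) 1) := by
    apply monotoneOn_of_deriv_nonneg (convex_Icc 0 1)
    · exact (((hcont _ hq0.le).add (hcont' _ hq0.le)).sub continuousOn_const).sub
        ((continuousOn_const.mul (continuousOn_id.pow 2)))
    · intro s hs
      rw [hint] at hs
      exact (hFderiv s hs).differentiableAt.differentiableWithinAt
    · intro s hs
      rw [hint] at hs
      rw [(hFderiv s hs).deriv]
      exact hGnonneg s ⟨hs.1.le, hs.2.le⟩
  have hF0 : F 0 = 0 := by simp [hF]; norm_num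
  have := hFmono (Set.mem_Icc.mpr ⟨le_refl 0, zero_le_one⟩) (Set.mem_Icc.mpr ⟨ht0, ht1⟩) ht0
  rw [hF0] at this
  simp only [hF] at this
  linarith


lemma sq_rpow_half (a : ℝ) {q : ℝ} (hq : 0 ≤ q) : ((a^2 : ℝ)) ^ (q/2) = |a| ^ q := by
  rw [← sq_abs, ← Real.rpow_natCast |a| 2, ← Real.rpow_mul (abs_nonneg a)]
  norm_num
  congr 1
  ring

lemma scalarBCL_main {q : ℝ} (hq1 : 1 < q) (hq2 : q ≤ 2) {a b : ℝ} (h : b^2 ≤ a^2) :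
    (a^2 + (q-1)*b^2) ^ (q/2) ≤ (|a+b|^q + |a-b|^q)/2 := by
  have hq0 : (0:ℝ) < q := by linarith
  rcases eq_or_ne a 0 with rfl | ha
  · have hb : b = 0 := by nlinarith [sq_nonneg b]
    subst hb
    simp [Real.zero_rpow (by positivity : q/2 ≠ 0), Real.zero_rpow hq0.ne']
  · set t : ℝ := b / a with ht
    have hb : b = a * t := by rw [ht]; field_simp
    have ht2 : t^2 ≤ 1 := by
      have ha2 : (0:ℝ) < a^2 := by positivity
      rw [ht, div_pow, div_le_one ha2]
      exact h
    have hu1 : |t| ≤ 1 := by nlinarith [sq_abs t, sq_nonneg (|t| - 1), abs_nonneg t]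
    set u : ℝ := |t| with hu
    have hu0 : 0 ≤ u := abs_nonneg t
    -- left side
    have e0 : a^2 + (q-1)*b^2 = a^2 * (1 + (q-1)*t^2) := by rw [hb]; ring
    have e1 : (a^2 + (q-1)*b^2) ^ (q/2) = (a^2)^(q/2) * (1 + (q-1)*t^2)^(q/2) := by
      rw [e0, Real.mul_rpow (by positivity) (by nlinarith [sq_nonneg t])]
    have bern : (1 + (q-1)*t^2)^(q/2) ≤ 1 + (q/2) * ((q-1)*t^2) :=
      rpow_one_add_le_one_add_mul_self (by nlinarith [sq_nonneg t]) (by positivity)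
        (by linarith)
    -- right side
    have habs : ∀ c : ℝ, |a * c| ^ q = |a|^q * |c|^q := by
      intro c; rw [abs_mul, Real.mul_rpow (abs_nonneg _) (abs_nonneg _)]
    have e2 : |a+b|^q + |a-b|^q = |a|^q * ((1+u)^q + (1-u)^q) := by
      have k1 : a + b = a * (1 + t) := by rw [hb]; ring
      have k2 : a - b = a * (1 - t) := by rw [hb]; ring
      rw [k1, k2, habs, habs]
      have htle : -1 ≤ t ∧ t ≤ 1 := abs_le.mp hu1
      rcases le_or_gt 0 t with hpos | hneg
      · rw [hu, abs_of_nonneg hpos, abs_of_nonneg (by linarith [htle.1] : (0:ℝ) ≤ 1 + t),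
          abs_of_nonneg (by linarith [htle.2] : (0:ℝ) ≤ 1 - t)]
        ring
      · rw [hu, abs_of_neg hneg, abs_of_nonneg (by linarith [htle.1] : (0:ℝ) ≤ 1 + t),
          abs_of_nonneg (by linarith [htle.2] : (0:ℝ) ≤ 1 - t)]
        have : 1 + -t = 1 - t := by ring
        rw [this]
        have : (1 : ℝ) - -t = 1 + t := by ring
        rw [this]
        ring
    have hcore : 2 + q * (q-1) * u^2 ≤ (1+u)^q + (1-u)^q := core1d hq1 hq2 hu0 hu1
    have hu2 : u^2 = t^2 := sq_abs t
    have haq : 0 ≤ |a|^q := Real.rpow_nonneg (abs_nonneg a) q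
    calc (a^2 + (q-1)*b^2) ^ (q/2) = (a^2)^(q/2) * (1 + (q-1)*t^2)^(q/2) := e1
      _ ≤ (a^2)^(q/2) * (1 + (q/2) * ((q-1)*t^2)) := by
          apply mul_le_mul_of_nonneg_left bern (by positivity)
      _ = |a|^q * ((2 + q*(q-1)*u^2)/2) := by rw [sq_rpow_half a hq0.le, hu2]; ring
      _ ≤ |a|^q * (((1+u)^q + (1-u)^q)/2) := by
          apply mul_le_mul_of_nonneg_left (by linarith) haq
      _ = (|a+b|^q + |a-b|^q)/2 := by rw [e2]; ring

lemma scalarBCL {q : ℝ} (hq1 : 1 < q) (hq2 : q ≤ 2) (a b : ℝ) :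
    (a^2 + (q-1)*b^2) ^ (q/2) ≤ (|a+b|^q + |a-b|^q)/2 := by
  rcases le_total (b^2) (a^2) with h | h
  · exact scalarBCL_main hq1 hq2 h
  · calc (a^2 + (q-1)*b^2) ^ (q/2) ≤ (b^2 + (q-1)*a^2) ^ (q/2) := by
          apply Real.rpow_le_rpow (by nlinarith [sq_nonneg a, sq_nonneg b]) (by nlinarith)
            (by positivity)
      _ ≤ (|b+a|^q + |b-a|^q)/2 := scalarBCL_main hq1 hq2 h
      _ = (|a+b|^q + |a-b|^q)/2 := by rw [add_comm b a, abs_sub_comm b a]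


-- concavity two-point
lemma rpow_concave2 {r : ℝ} (hr0 : 0 < r) (hr1 : r ≤ 1) {u v lam mu : ℝ} (hu : 0 ≤ u) (hv : 0 ≤ v)
    (hl : 0 ≤ lam) (hm : 0 ≤ mu) (hs : lam + mu = 1) :
    lam * u ^ r + mu * v ^ r ≤ (lam * u + mu * v) ^ r := by
  have := (Real.concaveOn_rpow hr0.le hr1).2 (Set.mem_Ici.mpr hu) (Set.mem_Ici.mpr hv) hl hm hs
  simpa [smul_eq_mul] using this

lemma rev_minkowski {ι : Type*} [Fintype ι] {r : ℝ} (hr0 : 0 < r) (hr1 : r ≤ 1)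
    (a b : ι → ℝ) (ha : ∀ j, 0 ≤ a j) (hb : ∀ j, 0 ≤ b j) :
    (∑ j, (a j) ^ r) ^ (1/r) + (∑ j, (b j) ^ r) ^ (1/r) ≤ (∑ j, (a j + b j) ^ r) ^ (1/r) := by
  set A := (∑ j, (a j) ^ r) ^ (1/r) with hA
  set B := (∑ j, (b j) ^ r) ^ (1/r) with hB
  have hsum_nonneg : ∀ (f : ι → ℝ), (∀ j, 0 ≤ f j) → (0:ℝ) ≤ ∑ j, (f j) ^ r :=
    fun f hf => Finset.sum_nonneg fun j _ => Real.rpow_nonneg (hf j) _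
  have hA0 : 0 ≤ A := Real.rpow_nonneg (hsum_nonneg a ha) _
  have hB0 : 0 ≤ B := Real.rpow_nonneg (hsum_nonneg b hb) _
  have hApow : A ^ r = ∑ j, (a j) ^ r := by
    rw [hA, ← Real.rpow_mul (hsum_nonneg a ha), one_div, inv_mul_cancel₀ hr0.ne', Real.rpow_one]
  have hBpow : B ^ r = ∑ j, (b j) ^ r := by
    rw [hB, ← Real.rpow_mul (hsum_nonneg b hb), one_div, inv_mul_cancel₀ hr0.ne', Real.rpow_one]
  -- zero cases
  rcases eq_or_lt_of_le hA0 with hAz | hApos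
  · have : ∑ j, (a j) ^ r = 0 := by rw [← hApow, ← hAz]; simp [Real.zero_rpow hr0.ne']
    have haz : ∀ j, a j = 0 := by
      intro j
      have h := (Finset.sum_eq_zero_iff_of_nonneg
        (fun j _ => Real.rpow_nonneg (ha j) r)).mp this j (Finset.mem_univ j)
      have := Real.rpow_natCast -- dummy
      by_contra hne
      have : 0 < a j := lt_of_le_of_ne (ha j) (Ne.symm hne)
      exact absurd h (ne_of_gt (Real.rpow_pos_of_pos this r))
    simp only [haz, zero_add, ← hAz, zero_add]
    exact le_refl _
  rcases eq_or_lt_of_le hB0 with hBz | hBpos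
  · have : ∑ j, (b j) ^ r = 0 := by rw [← hBpow, ← hBz]; simp [Real.zero_rpow hr0.ne']
    have hbz : ∀ j, b j = 0 := by
      intro j
      have h := (Finset.sum_eq_zero_iff_of_nonneg
        (fun j _ => Real.rpow_nonneg (hb j) r)).mp this j (Finset.mem_univ j)
      by_contra hne
      have : 0 < b j := lt_of_le_of_ne (hb j) (Ne.symm hne)
      exact absurd h (ne_of_gt (Real.rpow_pos_of_pos this r))
    simp only [hbz, add_zero, ← hBz, add_zero]
    exact le_refl _
  -- main case
  set S := A + B with hS
  have hSpos : 0 < S := by positivity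
  have key : ∀ j, ((a j + b j) / S) ^ r ≥ (A/S) * (a j / A) ^ r + (B/S) * (b j / B) ^ r := by
    intro j
    have e : (a j + b j) / S = (A/S) * (a j / A) + (B/S) * (b j / B) := by
      field_simp
    rw [e, ge_iff_le]
    exact rpow_concave2 hr0 hr1 (div_nonneg (ha j) hA0) (div_nonneg (hb j) hB0)
      (div_nonneg hA0 hSpos.le) (div_nonneg hB0 hSpos.le) (by field_simp; linarith)
  have hsum : 1 ≤ ∑ j, ((a j + b j) / S) ^ r := by
    have e1 : ∑ j, (A/S) * (a j / A) ^ r + ∑ j, (B/S) * (b j / B) ^ r ≤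
        ∑ j, ((a j + b j) / S) ^ r := by
      rw [← Finset.sum_add_distrib]
      exact Finset.sum_le_sum fun j _ => key j
    have e2 : ∑ j, (A/S) * (a j / A) ^ r = A/S := by
      have h : ∀ j, (A/S) * (a j / A) ^ r = (A/S)/(A^r) * (a j)^r := by
        intro j; rw [Real.div_rpow (ha _) hA0]; ring
      simp_rw [h]
      rw [← Finset.mul_sum, ← hApow]
      field_simp
    have e3 : ∑ j, (B/S) * (b j / B) ^ r = B/S := by
      have h : ∀ j, (B/S) * (b j / B) ^ r = (B/S)/(B^r) * (b j)^r := by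
        intro j; rw [Real.div_rpow (hb _) hB0]; ring
      simp_rw [h]
      rw [← Finset.mul_sum, ← hBpow]
      field_simp
    rw [e2, e3] at e1
    have : A/S + B/S = 1 := by field_simp; linarith
    linarith
  have hdiv : ∀ j, ((a j + b j) / S) ^ r = (a j + b j) ^ r / S ^ r := fun j =>
    Real.div_rpow (add_nonneg (ha j) (hb j)) hSpos.le r
  simp_rw [hdiv] at hsum
  rw [← Finset.sum_div] at hsum
  have hSr : (0:ℝ) < S ^ r := Real.rpow_pos_of_pos hSpos _
  have hfin : S ^ r ≤ ∑ j, (a j + b j) ^ r := by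
    rw [le_div_iff₀ hSr] at hsum
    linarith [hsum]
  calc S = (S ^ r) ^ (1/r) := by
        rw [← Real.rpow_mul hSpos.le, mul_one_div, div_self hr0.ne', Real.rpow_one]
    _ ≤ (∑ j, (a j + b j) ^ r) ^ (1/r) :=
        Real.rpow_le_rpow hSr.le hfin (by positivity)


lemma rpow_convex2 {p : ℝ} (hp : 1 ≤ p) {u v : ℝ} (hu : 0 ≤ u) (hv : 0 ≤ v) :
    ((1/2) * u + (1/2) * v) ^ p ≤ (1/2) * u ^ p + (1/2) * v ^ p := by
  have := (convexOn_rpow hp).2 (Set.mem_Ici.mpr hu) (Set.mem_Ici.mpr hv)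
    (by norm_num : (0:ℝ) ≤ 1/2) (by norm_num : (0:ℝ) ≤ 1/2) (by norm_num)
  simpa [smul_eq_mul] using this

lemma lpNorm_sq {ι : Type*} [Fintype ι] {q : ℝ} (hq : 0 < q) (x : ι → ℝ) :
    lpNorm q x ^ 2 = (∑ j, |x j| ^ q) ^ (2/q) := by
  have hs : (0:ℝ) ≤ ∑ j, |x j| ^ q := Finset.sum_nonneg fun j _ => rpow_nonneg (abs_nonneg _) _
  rw [lpNorm, ← Real.rpow_natCast _ 2, ← Real.rpow_mul hs]
  congr 1
  push_cast
  ring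

lemma bcl {d : ℕ} {q : ℝ} (hq1 : 1 < q) (hq2 : q ≤ 2) (x y : Fin d → ℝ) :
    lpNorm q (fun j => x j + y j) ^ 2 + (q-1) * lpNorm q (fun j => x j - y j) ^ 2
      ≤ 2 * (lpNorm q x ^ 2 + lpNorm q y ^ 2) := by
  have hq0 : (0:ℝ) < q := by linarith
  have hr0 : (0:ℝ) < q/2 := by linarith
  have hr1 : q/2 ≤ 1 := by linarith
  set X := ∑ j, |x j| ^ q with hX
  set Y := ∑ j, |y j| ^ q with hY
  have hX0 : 0 ≤ X := Finset.sum_nonneg fun j _ => rpow_nonneg (abs_nonneg _) _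
  have hY0 : 0 ≤ Y := Finset.sum_nonneg fun j _ => rpow_nonneg (abs_nonneg _) _
  set a : Fin d → ℝ := fun j => (x j + y j)^2 with haa
  set b : Fin d → ℝ := fun j => (q-1) * (x j - y j)^2 with hbb
  have ha : ∀ j, 0 ≤ a j := fun j => sq_nonneg _
  have hb : ∀ j, 0 ≤ b j := fun j => mul_nonneg (by linarith) (sq_nonneg _)
  have hinv : 1/(q/2) = 2/q := by field_simp
  -- term 1
  have t1 : lpNorm q (fun j => x j + y j) ^ 2 = (∑ j, (a j) ^ (q/2)) ^ (1/(q/2)) := by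
    rw [lpNorm_sq hq0, hinv]
    congr 1
    exact Finset.sum_congr rfl fun j _ => (sq_rpow_half (x j + y j) hq0.le).symm
  -- term 2
  have t2 : (q-1) * lpNorm q (fun j => x j - y j) ^ 2 = (∑ j, (b j) ^ (q/2)) ^ (1/(q/2)) := by
    have e : ∀ j, (b j) ^ (q/2) = (q-1)^(q/2) * |x j - y j| ^ q := by
      intro j
      rw [hbb]
      rw [Real.mul_rpow (by linarith) (sq_nonneg _), sq_rpow_half _ hq0.le]
    simp_rw [e]
    rw [← Finset.mul_sum, hinv,
      Real.mul_rpow (rpow_nonneg (by linarith : (0:ℝ) ≤ q-1) _)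
        (Finset.sum_nonneg fun j _ => rpow_nonneg (abs_nonneg _) _),
      ← Real.rpow_mul (by linarith : (0:ℝ) ≤ q-1), lpNorm_sq hq0]
    congr 2
    field_simp
    simp
  -- pointwise bound on (a j + b j)^(q/2)
  have pw : ∀ j, (a j + b j) ^ (q/2) ≤ (2^q * |x j| ^ q + 2^q * |y j| ^ q)/2 := by
    intro j
    have h := scalarBCL hq1 hq2 (x j + y j) (x j - y j)
    have e1 : x j + y j + (x j - y j) = 2 * x j := by ring
    have e2 : x j + y j - (x j - y j) = 2 * y j := by ring
    rw [e1, e2] at h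
    have e3 : ∀ u : ℝ, |2 * u| ^ q = 2^q * |u|^q := by
      intro u
      rw [abs_mul, Real.mul_rpow (abs_nonneg 2) (abs_nonneg u), abs_two]
    rw [e3, e3] at h
    exact h
  have hsum : ∑ j, (a j + b j) ^ (q/2) ≤ (2^q/2) * (X + Y) := by
    calc ∑ j, (a j + b j) ^ (q/2) ≤ ∑ j, (2^q * |x j| ^ q + 2^q * |y j| ^ q)/2 :=
          Finset.sum_le_sum fun j _ => pw j
      _ = (2^q/2) * (X + Y) := by
          rw [hX, hY]
          rw [← Finset.sum_div, Finset.sum_add_distrib, ← Finset.mul_sum, ← Finset.mul_sum]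
          ring
  -- combine
  have main := rev_minkowski hr0 hr1 a b ha hb
  rw [← t1, ← t2] at main
  have step2 : (∑ j, (a j + b j) ^ (q/2)) ^ (1/(q/2)) ≤ ((2^q/2) * (X + Y)) ^ (2/q) := by
    rw [hinv]
    apply Real.rpow_le_rpow (Finset.sum_nonneg fun j _ => rpow_nonneg (add_nonneg (ha j) (hb j)) _)
      hsum (by positivity)
  have step3 : ((2^q/2) * (X + Y)) ^ (2/q) ≤ 2 * (X ^ (2/q) + Y ^ (2/q)) := by
    have h2q : (0:ℝ) < 2^q := rpow_pos_of_pos two_pos q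
    have e : (2^q/2) * (X + Y) = (2^q) * ((1/2)*X + (1/2)*Y) := by ring
    rw [e, Real.mul_rpow h2q.le (by linarith [hX0, hY0] : (0:ℝ) ≤ (1/2)*X + (1/2)*Y)]
    have e4 : ((2:ℝ)^q) ^ (2/q) = 4 := by
      rw [← Real.rpow_mul (by norm_num : (0:ℝ) ≤ 2)]
      rw [show q * (2/q) = 2 by field_simp]
      norm_num
    rw [e4]
    have hconv := rpow_convex2 (by
      rw [le_div_iff₀ hq0]; linarith : (1:ℝ) ≤ 2/q) hX0 hY0
    nlinarith [rpow_nonneg hX0 (2/q), rpow_nonneg hY0 (2/q),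
      rpow_nonneg (by linarith [hX0, hY0] : (0:ℝ) ≤ (1/2)*X + (1/2)*Y) (2/q)]
  calc lpNorm q (fun j => x j + y j) ^ 2 + (q-1) * lpNorm q (fun j => x j - y j) ^ 2
      ≤ (∑ j, (a j + b j) ^ (q/2)) ^ (1/(q/2)) := main
    _ ≤ ((2^q/2) * (X + Y)) ^ (2/q) := step2
    _ ≤ 2 * (X ^ (2/q) + Y ^ (2/q)) := step3
    _ = 2 * (lpNorm q x ^ 2 + lpNorm q y ^ 2) := by rw [lpNorm_sq hq0, lpNorm_sq hq0]

-- midpoint strong convexity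
lemma midpoint_ineq {d : ℕ} {q : ℝ} (hq1 : 1 < q) (hq2 : q ≤ 2) (u v : Fin d → ℝ) :
    lpNorm q (fun j => (u j + v j)/2) ^ 2 ≤
      (lpNorm q u ^ 2 + lpNorm q v ^ 2)/2
        - (q-1)/4 * lpNorm q (fun j => u j - v j) ^ 2 := by
  have hq0 : (0:ℝ) < q := by linarith
  have e : lpNorm q (fun j => (u j + v j)/2) = (1/2) * lpNorm q (fun j => u j + v j) := by
    have : (fun j => (u j + v j)/2) = fun j => (1/2) * (u j + v j) := by
      funext j; ring
    rw [this, lpNorm_smul hq0]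
    norm_num
  have h := bcl hq1 hq2 u v
  rw [e]
  nlinarith [h]

/-- **Proposition 3.2 of the paper**: for `1 < q ≤ 2`, the mirror map
`ω(y) = (1/2)‖y‖_q²` is `(q-1)`-strongly convex on the unit ℓ_q ball with respect to
the ℓ_q norm, and the Bregman divergence from `0` satisfies
`max_{y ∈ B_q(1)} D_ω(y‖0) = 1/2`. -/
theorem lq_norm_sq_strongly_convex (d : ℕ) (hd : 0 < d)
    (q : ℝ) (hq1 : 1 < q) (hq2 : q ≤ 2) :
    (∀ x : Fin d → ℝ, lpNorm q x ≤ 1 → ∀ y : Fin d → ℝ, lpNorm q y ≤ 1 →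
      ∀ g : Fin d → ℝ,
      (∀ z : Fin d → ℝ, lpNorm q z ≤ 1 →
        (1 / 2) * lpNorm q x ^ 2 + dotp g (z - x) ≤ (1 / 2) * lpNorm q z ^ 2) →
      ((q - 1) / 2) * lpNorm q (y - x) ^ 2 ≤
        (1 / 2) * lpNorm q y ^ 2 - (1 / 2) * lpNorm q x ^ 2 - dotp g (y - x)) ∧
    IsGreatest ((fun y : Fin d → ℝ => (1 / 2) * lpNorm q y ^ 2) ''
        {y | lpNorm q y ≤ 1}) (1 / 2) := by
  have hq0 : (0:ℝ) < q := by linarith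
  constructor
  · intro x hx y hy g hsub
    set D : ℝ := lpNorm q (y - x) with hD
    set K : ℝ := ((q - 1)/2) * D ^ 2 with hK
    set W : ℝ := (1/2) * lpNorm q y ^ 2 - (1/2) * lpNorm q x ^ 2 with hW
    set P : ℝ := dotp g (y - x) with hP
    -- the sequence of points
    set c : ℕ → ℝ := fun n => (1/2 : ℝ)^n with hc
    set z : ℕ → (Fin d → ℝ) := fun n j => x j + c n * (y j - x j) with hz
    clear_value D K W P c z
    have hc0 : ∀ n, 0 < c n := fun n => by rw [hc]; positivity
    have hc1 : ∀ n, c n ≤ 1 := fun n => by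
      rw [hc]; exact pow_le_one₀ (by norm_num) (by norm_num)
    have hz0 : z 0 = y := by
      funext j; simp [hz, hc]
    have hzball : ∀ n, lpNorm q (z n) ≤ 1 := by
      intro n
      have e : z n = fun j => (1 - c n) * x j + (c n) * y j := by
        funext j; simp only [hz]; ring
      rw [e]
      calc lpNorm q (fun j => (1 - c n) * x j + (c n) * y j)
          ≤ lpNorm q (fun j => (1 - c n) * x j) + lpNorm q (fun j => (c n) * y j) :=
            lpNorm_add_le hq1.le _ _
        _ = |1 - c n| * lpNorm q x + |c n| * lpNorm q y := by
            rw [lpNorm_smul hq0, lpNorm_smul hq0]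
        _ = (1 - c n) * lpNorm q x + c n * lpNorm q y := by
            rw [abs_of_nonneg (by linarith [hc1 n]), abs_of_nonneg (hc0 n).le]
        _ ≤ (1 - c n) * 1 + c n * 1 := by
            have h1 := hc0 n; have h2 := hc1 n
            have := lpNorm_nonneg q x
            gcongr <;> linarith
        _ = 1 := by ring
    have hdist : ∀ n, lpNorm q (fun j => x j - z n j) = c n * D := by
      intro n
      have e : (fun j => x j - z n j) = fun j => (-(c n)) * ((y - x) j) := by
        funext j; simp only [hz, Pi.sub_apply]; ring
      rw [e, lpNorm_smul hq0, abs_neg, abs_of_nonneg (hc0 n).le, ← hD]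
    -- recursion
    have hrec : ∀ n, z (n+1) = fun j => (x j + z n j)/2 := by
      intro n
      funext j
      simp only [hz, hc, pow_succ]
      ring
    -- induction
    have hind : ∀ n, (1/2) * lpNorm q (z n) ^ 2 ≤
        (1/2) * lpNorm q x ^ 2 + c n * (W - K * (1 - c n)) := by
      intro n
      induction n with
      | zero =>
        rw [hz0]
        have : c 0 = 1 := by rw [hc]; norm_num
        rw [this, hW]
        ring_nf
        exact le_refl _

      | succ n ih =>
        have hmid := midpoint_ineq hq1 hq2 x (z n)
        rw [← hrec n] at hmid
        rw [hdist n] at hmid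
        have hcsucc : c (n+1) = c n / 2 := by simp only [hc, pow_succ]; ring
        rw [hcsucc]
        have hexp : (c n * D)^2 = c n ^ 2 * D ^ 2 := by ring
        rw [hexp] at hmid
        simp only [hK] at ih ⊢
        nlinarith [hmid, ih]
    -- combine with subgradient hypothesis
    have hfinal : ∀ n, K * (1 - c n) ≤ W - P := by
      intro n
      have h1 := hsub (z n) (hzball n)
      have h2 : dotp g (z n - x) = c n * P := by
        rw [hP]
        simp only [dotp, Pi.sub_apply, hz]
        rw [Finset.mul_sum]
        apply Finset.sum_congr rfl
        intro i _
        ring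
      rw [h2] at h1
      have h3 := hind n
      have h4 : c n * P ≤ c n * (W - K * (1 - c n)) := by nlinarith [h1, h3]
      have h5 := (mul_le_mul_iff_right₀ (hc0 n)).mp h4
      linarith
    -- take the limit
    have htend : Tendsto (fun n => K * (1 - c n)) atTop (nhds (K * (1 - 0))) := by
      apply Tendsto.const_mul
      apply Tendsto.const_sub
      simp only [hc]
      exact tendsto_pow_atTop_nhds_zero_of_lt_one (by norm_num) (by norm_num)
    have hlim : K * (1 - 0) ≤ W - P := le_of_tendsto htend (Filter.Eventually.of_forall hfinal)
    simp only [sub_zero, mul_one] at hlim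
    exact hlim
  · have hnorm : lpNorm q (fun j : Fin d => if j = (⟨0, hd⟩ : Fin d) then (1:ℝ) else 0) = 1 := by
      unfold lpNorm
      have e : ∀ j : Fin d, |if j = (⟨0, hd⟩ : Fin d) then (1:ℝ) else 0| ^ q
          = if j = (⟨0, hd⟩ : Fin d) then (1:ℝ) else 0 := by
        intro j
        by_cases h : j = (⟨0, hd⟩ : Fin d) <;> simp [h, Real.zero_rpow hq0.ne']
      simp_rw [e]
      rw [Finset.sum_ite_eq' Finset.univ (⟨0, hd⟩ : Fin d) (fun _ => (1:ℝ))]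
      simp
    constructor
    · refine ⟨fun j => if j = (⟨0, hd⟩ : Fin d) then (1:ℝ) else 0, ?_, ?_⟩
      · simp only [Set.mem_setOf_eq, hnorm]
        exact le_refl 1
      · show (1/2 : ℝ) * lpNorm q (fun j : Fin d => if j = (⟨0, hd⟩ : Fin d) then (1:ℝ) else 0) ^ 2 = 1/2
        rw [hnorm]
        norm_num
    · rintro v ⟨y, hy, rfl⟩
      simp only [Set.mem_setOf_eq] at hy
      have h0 := lpNorm_nonneg q y
      show (1/2 : ℝ) * lpNorm q y ^ 2 ≤ 1/2
      nlinarith
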